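/- If Φ : Ω → A₃ on a domain Ω ⊆ E₃ admits the representation Φ(ζ) = (1/(2πi))∮_γ (F₀(ξ) + F₁(ξ)ρ + F₂(ξ)ρ²)(ξ − ζ)⁻¹ dξ with F₀, F₁, F₂ holomorphic on D = f(Ω), then Φ extends to a function on the cylinder Π = {ζ ∈ E₃ : f(ζ) ∈ D} that is Lorch differentiable on Π, with Lorch derivative given by the same integral representation with F₀, F₁, F₂ replaced by F₀′, F₁′, F₂′. -/

import Mathlib

noncomputable section

/-- The commutative algebra `A₃ = ℂ[ρ]/(ρ³)`, with basis `{1, ρ, ρ²}`;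
an element `⟨a, b, c⟩` represents `a + b·ρ + c·ρ²`. -/
@[ext] structure A3 : Type where
  a : ℂ
  b : ℂ
  c : ℂ

namespace A3

instance : Zero A3 := ⟨⟨0, 0, 0⟩⟩
instance : One A3 := ⟨⟨1, 0, 0⟩⟩
instance : Add A3 := ⟨fun x y => ⟨x.a + y.a, x.b + y.b, x.c + y.c⟩⟩
instance : Neg A3 := ⟨fun x => ⟨-x.a, -x.b, -x.c⟩⟩
instance : Mul A3 :=
  ⟨fun x y => ⟨x.a * y.a, x.a * y.b + x.b * y.a, x.a * y.c + x.b * y.b + x.c * y.a⟩⟩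

@[simp] lemma zero_a : (0 : A3).a = 0 := rfl
@[simp] lemma zero_b : (0 : A3).b = 0 := rfl
@[simp] lemma zero_c : (0 : A3).c = 0 := rfl
@[simp] lemma one_a : (1 : A3).a = 1 := rfl
@[simp] lemma one_b : (1 : A3).b = 0 := rfl
@[simp] lemma one_c : (1 : A3).c = 0 := rfl
@[simp] lemma add_a (x y : A3) : (x + y).a = x.a + y.a := rfl
@[simp] lemma add_b (x y : A3) : (x + y).b = x.b + y.b := rfl
@[simp] lemma add_c (x y : A3) : (x + y).c = x.c + y.c := rfl
@[simp] lemma neg_a (x : A3) : (-x).a = -x.a := rfl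
@[simp] lemma neg_b (x : A3) : (-x).b = -x.b := rfl
@[simp] lemma neg_c (x : A3) : (-x).c = -x.c := rfl
@[simp] lemma mul_a (x y : A3) : (x * y).a = x.a * y.a := rfl
@[simp] lemma mul_b (x y : A3) : (x * y).b = x.a * y.b + x.b * y.a := rfl
@[simp] lemma mul_c (x y : A3) : (x * y).c = x.a * y.c + x.b * y.b + x.c * y.a := rfl

instance : CommRing A3 where
  add_assoc x y z := by ext <;> simp <;> ring
  zero_add x := by ext <;> simp
  add_zero x := by ext <;> simp
  add_comm x y := by ext <;> simp <;> ring
  neg_add_cancel x := by ext <;> simp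
  left_distrib x y z := by ext <;> simp <;> ring
  right_distrib x y z := by ext <;> simp <;> ring
  zero_mul x := by ext <;> simp
  mul_zero x := by ext <;> simp
  mul_assoc x y z := by ext <;> simp <;> ring
  one_mul x := by ext <;> simp
  mul_one x := by ext <;> simp
  mul_comm x y := by ext <;> simp <;> ring
  nsmul := fun n x => ⟨n • x.a, n • x.b, n • x.c⟩
  nsmul_zero x := by ext <;> exact zero_nsmul _
  nsmul_succ n x := by ext <;> exact succ_nsmul _ n
  zsmul := fun n x => ⟨n • x.a, n • x.b, n • x.c⟩
  zsmul_zero' x := by ext <;> exact zero_zsmul _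
  zsmul_succ' n x := by ext <;> exact SubNegMonoid.zsmul_succ' n _
  zsmul_neg' n x := by ext <;> exact SubNegMonoid.zsmul_neg' n _

/-- The canonical embedding `ℂ → A₃`. -/
def toA3 : ℂ →+* A3 where
  toFun r := ⟨r, 0, 0⟩
  map_one' := rfl
  map_mul' x y := by ext <;> simp
  map_zero' := rfl
  map_add' x y := by ext <;> simp

instance : Algebra ℂ A3 := toA3.toAlgebra
instance : Algebra ℝ A3 := (toA3.comp (algebraMap ℝ ℂ)).toAlgebra

@[simp] lemma smulC_a (r : ℂ) (x : A3) : (r • x).a = r * x.a := by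
  show (toA3 r * x).a = _ ; simp [toA3]
@[simp] lemma smulC_b (r : ℂ) (x : A3) : (r • x).b = r * x.b := by
  show (toA3 r * x).b = _ ; simp [toA3]
@[simp] lemma smulC_c (r : ℂ) (x : A3) : (r • x).c = r * x.c := by
  show (toA3 r * x).c = _ ; simp [toA3]
@[simp] lemma smulR_a (r : ℝ) (x : A3) : (r • x).a = (r : ℂ) * x.a := by
  show ((toA3.comp (algebraMap ℝ ℂ)) r * x).a = _ ; simp [toA3]
@[simp] lemma smulR_b (r : ℝ) (x : A3) : (r • x).b = (r : ℂ) * x.b := by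
  show ((toA3.comp (algebraMap ℝ ℂ)) r * x).b = _ ; simp [toA3]
@[simp] lemma smulR_c (r : ℝ) (x : A3) : (r • x).c = (r : ℂ) * x.c := by
  show ((toA3.comp (algebraMap ℝ ℂ)) r * x).c = _ ; simp [toA3]

/-- The nilpotent generator `ρ`. -/
def ρ : A3 := ⟨0, 1, 0⟩

lemma rho_sq : ρ ^ 2 = ⟨0, 0, 1⟩ := by ext <;> simp [ρ, sq]
lemma rho_cubed : ρ ^ 3 = 0 := by ext <;> simp [ρ, pow_succ, sq]

/-- The element `a + b·ρ + c·ρ²` of `A₃`. -/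
def el (a b c : ℂ) : A3 := algebraMap ℂ A3 a + b • ρ + c • ρ ^ 2

lemma el_def (a b c : ℂ) : el a b c = ⟨a, b, c⟩ := by
  simp only [el, rho_sq]; ext <;> simp [ρ] <;> simp [Algebra.algebraMap_eq_smul_one, toA3]

/-- The Euclidean norm `‖a + bρ + cρ²‖ = √(|a|² + |b|² + |c|²)`. -/
def nrm (x : A3) : ℝ :=
  Real.sqrt (‖x.a‖ ^ 2 + ‖x.b‖ ^ 2 + ‖x.c‖ ^ 2)

/-- The topology of `A₃` (that of the Euclidean norm, i.e. of `ℂ³`). -/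
instance : TopologicalSpace A3 :=
  TopologicalSpace.induced (fun x => (x.a, x.b, x.c)) inferInstance

/-- The functional `f(a + bρ + cρ²) = a`. -/
def fl (x : A3) : ℂ := x.a

/-- The set `I = {λ₁ρ + λ₂ρ² : λ₁, λ₂ ∈ ℂ}`. -/
def Iset : Set A3 := {x | ∃ l₁ l₂ : ℂ, x = l₁ • ρ + l₂ • ρ ^ 2}

/-- The kernel of `f`, i.e. the ideal `I`, as a real subspace of `A₃`. -/
def Iker : Submodule ℝ A3 where
  carrier := {x | x.a = 0}
  add_mem' := by intro x y hx hy; simp_all [Set.mem_setOf_eq]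
  zero_mem' := rfl
  smul_mem' := by intro r x hx; simp_all [Set.mem_setOf_eq]

/-- Componentwise contour integral over the circle `C(center, r)` of an `A₃`-valued function. -/
def cInt (g : ℂ → A3) (center : ℂ) (r : ℝ) : A3 :=
  ⟨∮ z in C(center, r), (g z).a, ∮ z in C(center, r), (g z).b, ∮ z in C(center, r), (g z).c⟩

end A3

open Metric

namespace A3

@[simp] lemma sub_a (x y : A3) : (x - y).a = x.a - y.a := rfl
@[simp] lemma sub_b (x y : A3) : (x - y).b = x.b - y.b := rfl
@[simp] lemma sub_c (x y : A3) : (x - y).c = x.c - y.c := rfl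
@[simp] lemma toA3_a (z : ℂ) : (toA3 z).a = z := rfl
@[simp] lemma toA3_b (z : ℂ) : (toA3 z).b = 0 := rfl
@[simp] lemma toA3_c (z : ℂ) : (toA3 z).c = 0 := rfl

lemma ring_inverse_eq {x : A3} (hx : x.a ≠ 0) :
    Ring.inverse x = ⟨x.a⁻¹, -x.b / x.a ^ 2, x.b ^ 2 / x.a ^ 3 - x.c / x.a ^ 2⟩ := by
  set y : A3 := ⟨x.a⁻¹, -x.b / x.a ^ 2, x.b ^ 2 / x.a ^ 3 - x.c / x.a ^ 2⟩ with hy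
  have hxy : x * y = 1 := by
    ext <;> simp [hy] <;> field_simp <;> ring
  have hyx : y * x = 1 := by rw [mul_comm]; exact hxy
  have : Ring.inverse ((⟨x, y, hxy, hyx⟩ : A3ˣ) : A3) = y := Ring.inverse_unit _
  simpa using this

lemma abs_le_nrm (x : A3) (w : ℂ) (hw : w = x.a ∨ w = x.b ∨ w = x.c) :
    ‖w‖ ≤ nrm x := by
  rw [nrm, show ‖w‖ = Real.sqrt (‖w‖ ^ 2) from
    (Real.sqrt_sq (norm_nonneg _)).symm]
  refine Real.sqrt_le_sqrt ?_
  have ha := norm_nonneg x.a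
  have hb := norm_nonneg x.b
  have hc := norm_nonneg x.c
  rcases hw with h | h | h <;> subst h <;> nlinarith

lemma abs_a_le_nrm (x : A3) : ‖x.a‖ ≤ nrm x := abs_le_nrm x _ (Or.inl rfl)
lemma abs_b_le_nrm (x : A3) : ‖x.b‖ ≤ nrm x := abs_le_nrm x _ (Or.inr (Or.inl rfl))
lemma abs_c_le_nrm (x : A3) : ‖x.c‖ ≤ nrm x := abs_le_nrm x _ (Or.inr (Or.inr rfl))

lemma nrm_le_sum (x : A3) : nrm x ≤ ‖x.a‖ + ‖x.b‖ + ‖x.c‖ := by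
  rw [nrm, show ‖x.a‖ + ‖x.b‖ + ‖x.c‖ =
      Real.sqrt ((‖x.a‖ + ‖x.b‖ + ‖x.c‖) ^ 2) from
    (Real.sqrt_sq (by positivity)).symm]
  refine Real.sqrt_le_sqrt ?_
  have ha := norm_nonneg x.a
  have hb := norm_nonneg x.b
  have hc := norm_nonneg x.c
  nlinarith

end A3

lemma circleIntegral_add' {f g : ℂ → ℂ} {c : ℂ} {R : ℝ} (hf : CircleIntegrable f c R)
    (hg : CircleIntegrable g c R) :
    (∮ z in C(c, R), (f z + g z)) = (∮ z in C(c, R), f z) + ∮ z in C(c, R), g z := by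
  simp only [circleIntegral, smul_add, intervalIntegral.integral_add hf.out hg.out]

lemma cauchy_formula {F : ℂ → ℂ} {a : ℂ} {r : ℝ} (hr : 0 < r)
    (hF : DifferentiableOn ℂ F (closedBall a r)) (n : ℕ) :
    (2 * Real.pi * Complex.I : ℂ)⁻¹ * (∮ z in C(a, r), (z - a)⁻¹ ^ n * ((z - a)⁻¹ * F z)) =
      (Nat.factorial n : ℂ)⁻¹ * iteratedDeriv n F a := by
  lift r to NNReal using hr.le with R
  have hR : 0 < R := by exact_mod_cast hr
  have h := hF.hasFPowerSeriesOnBall hR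
  have h1 := h.factorial_smul (1 : ℂ) n
  have h2 := cauchyPowerSeries_apply F a R n 1
  rw [h2] at h1
  rw [iteratedDeriv_eq_iteratedFDeriv, ← h1]
  have hne : (Nat.factorial n : ℂ) ≠ 0 := by exact_mod_cast Nat.factorial_ne_zero n
  simp only [smul_eq_mul, nsmul_eq_mul, one_div]
  field_simp
open Metric in
lemma key_formula {D : Set ℂ} (hD : IsOpen D) {G₀ G₁ G₂ : ℂ → ℂ}
    (h₀ : DifferentiableOn ℂ G₀ D) (h₁ : DifferentiableOn ℂ G₁ D)
    (h₂ : DifferentiableOn ℂ G₂ D) (ζ : A3) {r : ℝ} (hr : 0 < r)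
    (hball : closedBall ζ.a r ⊆ D) :
    (2 * Real.pi * Complex.I : ℂ)⁻¹ •
      A3.cInt (fun ξ => A3.el (G₀ ξ) (G₁ ξ) (G₂ ξ) * Ring.inverse (A3.toA3 ξ - ζ)) ζ.a r
    = ⟨G₀ ζ.a, ζ.b * deriv G₀ ζ.a + G₁ ζ.a,
        ζ.b ^ 2 * deriv (deriv G₀) ζ.a / 2 + ζ.c * deriv G₀ ζ.a + ζ.b * deriv G₁ ζ.a +
          G₂ ζ.a⟩ := by
  set a := ζ.a with ha
  set k : ℕ → (ℂ → ℂ) → ℂ → ℂ := fun n G z => (z - a)⁻¹ ^ n * ((z - a)⁻¹ * G z) with hk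
  have hsub : sphere a r ⊆ D := sphere_subset_closedBall.trans hball
  have hne : ∀ z ∈ sphere a r, z - a ≠ 0 := by
    intro z hz
    refine sub_ne_zero.2 fun h => ?_
    rw [h] at hz
    simp [mem_sphere] at hz
    exact hr.ne' hz.symm
  have hcont : ∀ (n : ℕ) (G : ℂ → ℂ), ContinuousOn G (sphere a r) →
      ContinuousOn (k n G) (sphere a r) := by
    intro n G hG
    have h1 : ContinuousOn (fun z : ℂ => (z - a)⁻¹) (sphere a r) :=
      (continuousOn_id.sub continuousOn_const).inv₀ hne
    exact (h1.pow n).mul (h1.mul hG)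
  have hG₀c : ContinuousOn G₀ (sphere a r) := h₀.continuousOn.mono hsub
  have hG₁c : ContinuousOn G₁ (sphere a r) := h₁.continuousOn.mono hsub
  have hG₂c : ContinuousOn G₂ (sphere a r) := h₂.continuousOn.mono hsub
  have hint : ∀ (c : ℂ) (n : ℕ) (G : ℂ → ℂ), ContinuousOn G (sphere a r) →
      CircleIntegrable (fun z => c * k n G z) a r := by
    intro c n G hG
    exact (continuousOn_const.mul (hcont n G hG)).circleIntegrable hr.le
  -- pointwise formula for the integrand
  have hcomp : ∀ z ∈ sphere a r,
      (A3.el (G₀ z) (G₁ z) (G₂ z) * Ring.inverse (A3.toA3 z - ζ)) =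
      ⟨k 0 G₀ z,
       ζ.b * k 1 G₀ z + 1 * k 0 G₁ z,
       ζ.b ^ 2 * k 2 G₀ z + (ζ.c * k 1 G₀ z + (ζ.b * k 1 G₁ z + 1 * k 0 G₂ z))⟩ := by
    intro z hz
    have hza := hne z hz
    have hxa : (A3.toA3 z - ζ).a ≠ 0 := by simpa using hza
    rw [A3.el_def, A3.ring_inverse_eq hxa]
    ext <;> simp [hk, ← ha] <;> field_simp <;> ring
  -- the Cauchy formulas
  have hcf : ∀ (n : ℕ) (G : ℂ → ℂ), DifferentiableOn ℂ G D →
      (2 * Real.pi * Complex.I : ℂ)⁻¹ * (∮ z in C(a, r), k n G z) =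
        (Nat.factorial n : ℂ)⁻¹ * iteratedDeriv n G a := fun n G hG =>
    cauchy_formula hr (hG.mono hball) n
  have c00 : (2 * Real.pi * Complex.I : ℂ)⁻¹ * (∮ z in C(a, r), k 0 G₀ z) = G₀ a := by
    simpa using hcf 0 G₀ h₀
  have c01 : (2 * Real.pi * Complex.I : ℂ)⁻¹ * (∮ z in C(a, r), k 1 G₀ z) = deriv G₀ a := by
    simpa [iteratedDeriv_one] using hcf 1 G₀ h₀
  have c02 : (2 * Real.pi * Complex.I : ℂ)⁻¹ * (∮ z in C(a, r), k 2 G₀ z) =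
      (2 : ℂ)⁻¹ * deriv (deriv G₀) a := by
    have := hcf 2 G₀ h₀
    rw [show iteratedDeriv 2 G₀ = deriv (deriv G₀) by
      rw [iteratedDeriv_succ, iteratedDeriv_one]] at this
    simpa [Nat.factorial] using this
  have c10 : (2 * Real.pi * Complex.I : ℂ)⁻¹ * (∮ z in C(a, r), k 0 G₁ z) = G₁ a := by
    simpa using hcf 0 G₁ h₁
  have c11 : (2 * Real.pi * Complex.I : ℂ)⁻¹ * (∮ z in C(a, r), k 1 G₁ z) = deriv G₁ a := by
    simpa [iteratedDeriv_one] using hcf 1 G₁ h₁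
  have c20 : (2 * Real.pi * Complex.I : ℂ)⁻¹ * (∮ z in C(a, r), k 0 G₂ z) = G₂ a := by
    simpa using hcf 0 G₂ h₂
  -- smul pull-out
  have hsm : ∀ (c : ℂ) (f : ℂ → ℂ), (∮ z in C(a, r), c * f z) = c * ∮ z in C(a, r), f z := by
    intro c f
    simpa [smul_eq_mul] using circleIntegral.integral_smul c f a r
  refine A3.ext ?_ ?_ ?_
  · show (2 * Real.pi * Complex.I : ℂ)⁻¹ *
      (∮ z in C(a, r), (A3.el (G₀ z) (G₁ z) (G₂ z) * Ring.inverse (A3.toA3 z - ζ)).a) = _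
    rw [circleIntegral.integral_congr hr.le
      (fun z hz => by rw [hcomp z hz] : Set.EqOn _ (fun z => k 0 G₀ z) (sphere a r))]
    exact c00
  · simp only [A3.smulC_b]
    show (2 * Real.pi * Complex.I : ℂ)⁻¹ *
      (∮ z in C(a, r), (A3.el (G₀ z) (G₁ z) (G₂ z) * Ring.inverse (A3.toA3 z - ζ)).b) =
      ζ.b * deriv G₀ a + G₁ a
    rw [circleIntegral.integral_congr hr.le
      (fun z hz => by rw [hcomp z hz] :
        Set.EqOn _ (fun z => ζ.b * k 1 G₀ z + 1 * k 0 G₁ z) (sphere a r))]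
    rw [circleIntegral_add' (hint ζ.b 1 G₀ hG₀c) (hint 1 0 G₁ hG₁c), hsm, hsm]
    linear_combination ζ.b * c01 + c10
  · simp only [A3.smulC_c]
    show (2 * Real.pi * Complex.I : ℂ)⁻¹ *
      (∮ z in C(a, r), (A3.el (G₀ z) (G₁ z) (G₂ z) * Ring.inverse (A3.toA3 z - ζ)).c) =
      ζ.b ^ 2 * deriv (deriv G₀) a / 2 + ζ.c * deriv G₀ a + ζ.b * deriv G₁ a + G₂ a
    rw [circleIntegral.integral_congr hr.le
      (fun z hz => by rw [hcomp z hz] :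
        Set.EqOn _ (fun z => ζ.b ^ 2 * k 2 G₀ z +
          (ζ.c * k 1 G₀ z + (ζ.b * k 1 G₁ z + 1 * k 0 G₂ z))) (sphere a r))]
    have hintc : CircleIntegrable
        (fun z => ζ.c * k 1 G₀ z + (ζ.b * k 1 G₁ z + 1 * k 0 G₂ z)) a r := by
      apply ContinuousOn.circleIntegrable hr.le
      exact (continuousOn_const.mul (hcont 1 G₀ hG₀c)).add
        ((continuousOn_const.mul (hcont 1 G₁ hG₁c)).add
          (continuousOn_const.mul (hcont 0 G₂ hG₂c)))
    have hintc2 : CircleIntegrable (fun z => ζ.b * k 1 G₁ z + 1 * k 0 G₂ z) a r := by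
      apply ContinuousOn.circleIntegrable hr.le
      exact (continuousOn_const.mul (hcont 1 G₁ hG₁c)).add
        (continuousOn_const.mul (hcont 0 G₂ hG₂c))
    rw [circleIntegral_add' (hint (ζ.b ^ 2) 2 G₀ hG₀c) hintc,
      circleIntegral_add' (hint ζ.c 1 G₀ hG₀c) hintc2,
      circleIntegral_add' (hint ζ.b 1 G₁ hG₁c) (hint 1 0 G₂ hG₂c),
      hsm, hsm, hsm, hsm]
    linear_combination ζ.b ^ 2 * c02 + ζ.c * c01 + ζ.b * c11 + c20
/-- a function on `Ω ⊆ E₃` with the Cauchy-type integral representation by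
holomorphic `F₀, F₁, F₂` on `D = f(Ω)` extends to the cylinder `Π = {ζ ∈ E₃ : f(ζ) ∈ D}`
to a Lorch differentiable function, whose Lorch derivative has the same representation
with the derivatives `F₀', F₁', F₂'`. -/
theorem stmt19 (E₃ : Submodule ℝ A3) (hsurj : ∀ w : ℂ, ∃ ζ ∈ E₃, A3.fl ζ = w)
    (Ω : Set A3) (hΩE : Ω ⊆ (E₃ : Set A3)) (hopen : IsOpen {x : E₃ | (x : A3) ∈ Ω})
    (D : Set ℂ) (hD : IsOpen D) (hDΩ : D = A3.fl '' Ω)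
    (F₀ F₁ F₂ : ℂ → ℂ) (hF₀ : DifferentiableOn ℂ F₀ D)
    (hF₁ : DifferentiableOn ℂ F₁ D) (hF₂ : DifferentiableOn ℂ F₂ D)
    (Φ : A3 → A3)
    (hrep : ∀ ζ ∈ Ω, ∃ r > (0 : ℝ), Metric.closedBall (A3.fl ζ) r ⊆ D ∧
      Φ ζ = (2 * Real.pi * Complex.I : ℂ)⁻¹ •
        A3.cInt (fun ξ => A3.el (F₀ ξ) (F₁ ξ) (F₂ ξ) * Ring.inverse (A3.toA3 ξ - ζ))
          (A3.fl ζ) r) :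
    ∃ Ψ Ψ' : A3 → A3,
      (∀ ζ ∈ Ω, Ψ ζ = Φ ζ) ∧
      (∀ ζ : A3, ζ ∈ E₃ → A3.fl ζ ∈ D → ∀ r > (0 : ℝ),
        Metric.closedBall (A3.fl ζ) r ⊆ D →
        Ψ' ζ = (2 * Real.pi * Complex.I : ℂ)⁻¹ •
          A3.cInt (fun ξ =>
              A3.el (deriv F₀ ξ) (deriv F₁ ξ) (deriv F₂ ξ) *
                Ring.inverse (A3.toA3 ξ - ζ)) (A3.fl ζ) r) ∧
      (∀ ζ : A3, ζ ∈ E₃ → A3.fl ζ ∈ D → ∀ ε > (0 : ℝ), ∃ δ > (0 : ℝ),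
        ∀ h : A3, h ∈ E₃ → A3.nrm h < δ →
          A3.nrm (Ψ (ζ + h) - Ψ ζ - h * Ψ' ζ) ≤ ε * A3.nrm h) := by
  have hd₀ : DifferentiableOn ℂ (deriv F₀) D := ((hF₀.analyticOnNhd hD).deriv).differentiableOn
  have hd₁ : DifferentiableOn ℂ (deriv F₁) D := ((hF₁.analyticOnNhd hD).deriv).differentiableOn
  have hd₂ : DifferentiableOn ℂ (deriv F₂) D := ((hF₂.analyticOnNhd hD).deriv).differentiableOn
  refine ⟨fun x => ⟨F₀ x.a, x.b * deriv F₀ x.a + F₁ x.a,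
      x.b ^ 2 * deriv (deriv F₀) x.a / 2 + x.c * deriv F₀ x.a + x.b * deriv F₁ x.a + F₂ x.a⟩,
    fun x => ⟨deriv F₀ x.a, x.b * deriv (deriv F₀) x.a + deriv F₁ x.a,
      x.b ^ 2 * deriv (deriv (deriv F₀)) x.a / 2 + x.c * deriv (deriv F₀) x.a +
        x.b * deriv (deriv F₁) x.a + deriv F₂ x.a⟩, ?_, ?_, ?_⟩
  · intro ζ hζ
    obtain ⟨r, hr, hball, heq⟩ := hrep ζ hζ
    rw [heq, show A3.fl ζ = ζ.a from rfl] at *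
    rw [key_formula hD hF₀ hF₁ hF₂ ζ hr hball]
  · intro ζ hζ ha r hr hball
    rw [show A3.fl ζ = ζ.a from rfl] at *
    rw [key_formula hD hd₀ hd₁ hd₂ ζ hr hball]
  · intro ζ hζE ha ε hε
    rw [show A3.fl ζ = ζ.a from rfl] at ha
    have hd0 : DifferentiableAt ℂ F₀ ζ.a := hF₀.differentiableAt (hD.mem_nhds ha)
    have hd1 : DifferentiableAt ℂ F₁ ζ.a := hF₁.differentiableAt (hD.mem_nhds ha)
    have hd2 : DifferentiableAt ℂ F₂ ζ.a := hF₂.differentiableAt (hD.mem_nhds ha)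
    have hd0' : DifferentiableAt ℂ (deriv F₀) ζ.a := hd₀.differentiableAt (hD.mem_nhds ha)
    have hd0'' : DifferentiableAt ℂ (deriv (deriv F₀)) ζ.a :=
      (((hF₀.analyticOnNhd hD).deriv).deriv).differentiableOn.differentiableAt (hD.mem_nhds ha)
    have hd1' : DifferentiableAt ℂ (deriv F₁) ζ.a := hd₁.differentiableAt (hD.mem_nhds ha)
    -- basic linear pieces
    have hp : HasFDerivAt (fun h : ℂ × ℂ × ℂ => ζ.a + h.1)
        (ContinuousLinearMap.fst ℂ ℂ (ℂ × ℂ)) 0 :=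
      (ContinuousLinearMap.fst ℂ ℂ (ℂ × ℂ)).hasFDerivAt.const_add ζ.a
    have hq : HasFDerivAt (fun h : ℂ × ℂ × ℂ => ζ.b + h.2.1)
        ((ContinuousLinearMap.fst ℂ ℂ ℂ).comp (ContinuousLinearMap.snd ℂ ℂ (ℂ × ℂ))) 0 :=
      (((ContinuousLinearMap.fst ℂ ℂ ℂ).comp
        (ContinuousLinearMap.snd ℂ ℂ (ℂ × ℂ))).hasFDerivAt).const_add ζ.b
    have hs : HasFDerivAt (fun h : ℂ × ℂ × ℂ => ζ.c + h.2.2)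
        ((ContinuousLinearMap.snd ℂ ℂ ℂ).comp (ContinuousLinearMap.snd ℂ ℂ (ℂ × ℂ))) 0 :=
      (((ContinuousLinearMap.snd ℂ ℂ ℂ).comp
        (ContinuousLinearMap.snd ℂ ℂ (ℂ × ℂ))).hasFDerivAt).const_add ζ.c
    have hcomp : ∀ G : ℂ → ℂ, DifferentiableAt ℂ G ζ.a →
        HasFDerivAt (fun h : ℂ × ℂ × ℂ => G (ζ.a + h.1))
          (deriv G ζ.a • ContinuousLinearMap.fst ℂ ℂ (ℂ × ℂ)) 0 := by
      intro G hG
      have := HasDerivAt.comp_hasFDerivAt_of_eq 0 hG.hasDerivAt hp (by simp)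
      exact this
    obtain ⟨L₁, hL₁, hL₁v⟩ : ∃ L : ℂ × ℂ × ℂ →L[ℂ] ℂ,
        HasFDerivAt (fun h : ℂ × ℂ × ℂ => F₀ (ζ.a + h.1)) L 0 ∧
        ∀ v : ℂ × ℂ × ℂ, L v = v.1 * deriv F₀ ζ.a := by
      refine ⟨_, hcomp F₀ hd0, fun v => ?_⟩
      simp [mul_comm]
    obtain ⟨L₂, hL₂, hL₂v⟩ : ∃ L : ℂ × ℂ × ℂ →L[ℂ] ℂ,
        HasFDerivAt (fun h : ℂ × ℂ × ℂ =>
          (ζ.b + h.2.1) * deriv F₀ (ζ.a + h.1) + F₁ (ζ.a + h.1)) L 0 ∧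
        ∀ v : ℂ × ℂ × ℂ, L v = v.1 * (ζ.b * deriv (deriv F₀) ζ.a + deriv F₁ ζ.a) +
          v.2.1 * deriv F₀ ζ.a := by
      refine ⟨_, (hq.mul (hcomp (deriv F₀) hd0')).add (hcomp F₁ hd1), fun v => ?_⟩
      simp
      try ring
    obtain ⟨L₃, hL₃, hL₃v⟩ : ∃ L : ℂ × ℂ × ℂ →L[ℂ] ℂ,
        HasFDerivAt (fun h : ℂ × ℂ × ℂ =>
          (ζ.b + h.2.1) * (ζ.b + h.2.1) * deriv (deriv F₀) (ζ.a + h.1) * (2:ℂ)⁻¹ +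
            (ζ.c + h.2.2) * deriv F₀ (ζ.a + h.1) +
            ((ζ.b + h.2.1) * deriv F₁ (ζ.a + h.1) + F₂ (ζ.a + h.1))) L 0 ∧
        ∀ v : ℂ × ℂ × ℂ, L v =
          v.1 * (ζ.b ^ 2 * deriv (deriv (deriv F₀)) ζ.a / 2 + ζ.c * deriv (deriv F₀) ζ.a +
            ζ.b * deriv (deriv F₁) ζ.a + deriv F₂ ζ.a) +
          v.2.1 * (ζ.b * deriv (deriv F₀) ζ.a + deriv F₁ ζ.a) + v.2.2 * deriv F₀ ζ.a := by
      refine ⟨_, ((((hq.mul hq).mul (hcomp (deriv (deriv F₀)) hd0'')).mul_const ((2:ℂ)⁻¹)).add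
        (hs.mul (hcomp (deriv F₀) hd0'))).add
        ((hq.mul (hcomp (deriv F₁) hd1')).add (hcomp F₂ hd2)), fun v => ?_⟩
      simp
      try ring
    have e₁ := hL₁.isLittleO.def (show (0:ℝ) < ε / 3 by positivity)
    have e₂ := hL₂.isLittleO.def (show (0:ℝ) < ε / 3 by positivity)
    have e₃ := hL₃.isLittleO.def (show (0:ℝ) < ε / 3 by positivity)
    rw [Metric.eventually_nhds_iff] at e₁ e₂ e₃
    obtain ⟨δ₁, hδ₁, H₁⟩ := e₁
    obtain ⟨δ₂, hδ₂, H₂⟩ := e₂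
    obtain ⟨δ₃, hδ₃, H₃⟩ := e₃
    refine ⟨min δ₁ (min δ₂ δ₃), by positivity, ?_⟩
    intro h _ hnh
    have hvn : ‖((h.a, h.b, h.c) : ℂ × ℂ × ℂ)‖ ≤ A3.nrm h := by
      rw [Prod.norm_def, Prod.norm_def]
      refine max_le ?_ (max_le ?_ ?_)
      exacts [A3.abs_a_le_nrm h, A3.abs_b_le_nrm h, A3.abs_c_le_nrm h]
    have hvd : ∀ d : ℝ, A3.nrm h < d → dist ((h.a, h.b, h.c) : ℂ × ℂ × ℂ) 0 < d := by
      intro d hd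
      rw [dist_zero_right]
      exact lt_of_le_of_lt hvn hd
    have b₁ := H₁ (hvd δ₁ (lt_of_lt_of_le hnh (min_le_left _ _)))
    have b₂ := H₂ (hvd δ₂ (lt_of_lt_of_le hnh ((min_le_right _ _).trans (min_le_left _ _))))
    have b₃ := H₃ (hvd δ₃ (lt_of_lt_of_le hnh ((min_le_right _ _).trans (min_le_right _ _))))
    simp only [sub_zero, Prod.fst_zero, Prod.snd_zero, add_zero, hL₁v, hL₂v, hL₃v,
      dist_zero_right] at b₁ b₂ b₃
    have hnn : (0:ℝ) ≤ ε / 3 := by positivity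
    have hbn : ∀ w : ℂ, ‖w‖ ≤ ε / 3 * ‖((h.a, h.b, h.c) : ℂ × ℂ × ℂ)‖ →
        ‖w‖ ≤ ε / 3 * A3.nrm h := by
      intro w hw
      exact hw.trans (mul_le_mul_of_nonneg_left hvn hnn)
    set d : A3 := (fun x : A3 => (⟨F₀ x.a, x.b * deriv F₀ x.a + F₁ x.a,
        x.b ^ 2 * deriv (deriv F₀) x.a / 2 + x.c * deriv F₀ x.a + x.b * deriv F₁ x.a +
          F₂ x.a⟩ : A3)) (ζ + h) -
      (fun x : A3 => (⟨F₀ x.a, x.b * deriv F₀ x.a + F₁ x.a,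
        x.b ^ 2 * deriv (deriv F₀) x.a / 2 + x.c * deriv F₀ x.a + x.b * deriv F₁ x.a +
          F₂ x.a⟩ : A3)) ζ -
      h * (fun x : A3 => (⟨deriv F₀ x.a, x.b * deriv (deriv F₀) x.a + deriv F₁ x.a,
        x.b ^ 2 * deriv (deriv (deriv F₀)) x.a / 2 + x.c * deriv (deriv F₀) x.a +
          x.b * deriv (deriv F₁) x.a + deriv F₂ x.a⟩ : A3)) ζ with hdd
    have eda : ‖d.a‖ ≤ ε / 3 * A3.nrm h := by
      refine hbn _ ?_
      have : d.a = F₀ (ζ.a + h.a) - F₀ ζ.a - (h.a, h.b, h.c).1 * deriv F₀ ζ.a := by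
        simp [hdd]
      rw [this]
      exact b₁
    have edb : ‖d.b‖ ≤ ε / 3 * A3.nrm h := by
      refine hbn _ ?_
      have : d.b = (ζ.b + (h.a, h.b, h.c).2.1) * deriv F₀ (ζ.a + (h.a, h.b, h.c).1) +
          F₁ (ζ.a + (h.a, h.b, h.c).1) - (ζ.b * deriv F₀ ζ.a + F₁ ζ.a) -
          ((h.a, h.b, h.c).1 * (ζ.b * deriv (deriv F₀) ζ.a + deriv F₁ ζ.a) +
            (h.a, h.b, h.c).2.1 * deriv F₀ ζ.a) := by
        simp [hdd]
        try ring
      rw [this]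
      exact b₂
    have edc : ‖d.c‖ ≤ ε / 3 * A3.nrm h := by
      refine hbn _ ?_
      have : d.c = (ζ.b + (h.a, h.b, h.c).2.1) * (ζ.b + (h.a, h.b, h.c).2.1) *
            deriv (deriv F₀) (ζ.a + (h.a, h.b, h.c).1) * (2:ℂ)⁻¹ +
          (ζ.c + (h.a, h.b, h.c).2.2) * deriv F₀ (ζ.a + (h.a, h.b, h.c).1) +
          ((ζ.b + (h.a, h.b, h.c).2.1) * deriv F₁ (ζ.a + (h.a, h.b, h.c).1) +
            F₂ (ζ.a + (h.a, h.b, h.c).1)) -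
          (ζ.b * ζ.b * deriv (deriv F₀) ζ.a / 2 + ζ.c * deriv F₀ ζ.a +
            (ζ.b * deriv F₁ ζ.a + F₂ ζ.a)) -
          ((h.a, h.b, h.c).1 * (ζ.b ^ 2 * deriv (deriv (deriv F₀)) ζ.a / 2 +
              ζ.c * deriv (deriv F₀) ζ.a + ζ.b * deriv (deriv F₁) ζ.a + deriv F₂ ζ.a) +
            (h.a, h.b, h.c).2.1 * (ζ.b * deriv (deriv F₀) ζ.a + deriv F₁ ζ.a) +
            (h.a, h.b, h.c).2.2 * deriv F₀ ζ.a) := by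
        simp [hdd]
        try ring
      rw [this]
      exact b₃
    have := A3.nrm_le_sum d
    calc A3.nrm d ≤ ‖d.a‖ + ‖d.b‖ + ‖d.c‖ := this
      _ ≤ ε / 3 * A3.nrm h + ε / 3 * A3.nrm h + ε / 3 * A3.nrm h := by
          gcongr <;> assumption
      _ = ε * A3.nrm h := by ring
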